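/- Let s, q be natural numbers, d₁,…,d_s positive integers, and (b_{i,j})_{1≤i≤s, 1≤j≤q} integers. For each i, let rᵢ ∈ ℤ^{s+q} be the vector whose i-th coordinate is dᵢ, whose other coordinates among the first s are 0, and whose last q coordinates are (b_{i,1},…,b_{i,q}). Then the following are equivalent: (1) the subgroup of ℤ^{s+q} spanned by r₁,…,r_s is a saturated sublattice (i.e., whenever m·v lies in the span for some nonzero integer m and v ∈ ℤ^{s+q}, then v lies in the span); (2) for every field K, the map (Kˣ)^s × (Kˣ)^q → (Kˣ)^s sending (y₁,…,y_s,x₁,…,x_q) to (y₁^{d₁} x₁^{b_{1,1}}⋯x_q^{b_{1,q}}, …, y_s^{d_s} x₁^{b_{s,1}}⋯x_q^{b_{s,q}}) is surjective. -/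

import Mathlib

private lemma zpow_finset_sum {G : Type*} [CommGroup G] {ι : Type*} (x : G) (f : ι → ℤ)
    (s : Finset ι) : x ^ (∑ i ∈ s, f i) = ∏ i ∈ s, x ^ f i := by
  classical
  induction s using Finset.cons_induction with
  | empty => simp
  | cons a s ha ih => rw [Finset.sum_cons, Finset.prod_cons, zpow_add, ih]

/-- Let `s, q` be natural numbers, `d₁, …, d_s` positive integers and
`(b i j)` an `s × q` integer matrix. For each `i`, let `rᵢ ∈ ℤ^(s+q)` be the vector
whose `i`-th coordinate among the first `s` is `dᵢ`, whose other coordinates among the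
first `s` are `0`, and whose last `q` coordinates are `(b i 1, …, b i q)`. Then the
following are equivalent:
(1) the subgroup of `ℤ^(s+q)` spanned by `r₁, …, r_s` is saturated: whenever `m • v`
lies in the span for some nonzero integer `m`, then `v` lies in the span;
(2) for every field `K`, the map `(Kˣ)^s × (Kˣ)^q → (Kˣ)^s` sending `(y, x)` to
`(y₁^{d₁} x₁^{b₁₁} ⋯ x_q^{b₁q}, …, y_s^{d_s} x₁^{b_s1} ⋯ x_q^{b_sq})` is surjective. -/
theorem saturated_iff_monomial_map_surjective (s q : ℕ) (d : Fin s → ℤ) (hd : ∀ i, 0 < d i)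
    (b : Fin s → Fin q → ℤ) :
    (∀ (m : ℤ) (v : (Fin s → ℤ) × (Fin q → ℤ)), m ≠ 0 →
        m • v ∈ Submodule.span ℤ
          (Set.range fun i : Fin s => ((Pi.single i (d i) : Fin s → ℤ), b i)) →
        v ∈ Submodule.span ℤ
          (Set.range fun i : Fin s => ((Pi.single i (d i) : Fin s → ℤ), b i))) ↔
      ∀ (K : Type) [Field K],
        Function.Surjective (fun p : (Fin s → Kˣ) × (Fin q → Kˣ) =>
          fun i : Fin s => p.1 i ^ d i * ∏ j : Fin q, p.2 j ^ b i j) := by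
  set r : Fin s → (Fin s → ℤ) × (Fin q → ℤ) :=
    fun i => ((Pi.single i (d i) : Fin s → ℤ), b i) with hr
  set L := Submodule.span ℤ (Set.range r) with hL
  constructor
  · -- saturated → surjective
    intro h1 K _ z
    haveI : NoZeroSMulDivisors ℤ (((Fin s → ℤ) × (Fin q → ℤ)) ⧸ L) := by
      constructor
      intro m x hmx
      by_contra hcon
      push_neg at hcon
      obtain ⟨hm, hx⟩ := hcon
      obtain ⟨v, rfl⟩ := Submodule.mkQ_surjective L x
      apply hx
      rw [Submodule.mkQ_apply, Submodule.Quotient.mk_eq_zero]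
      apply h1 m v hm
      rw [← map_smul] at hmx
      rwa [Submodule.mkQ_apply, Submodule.Quotient.mk_eq_zero] at hmx
    obtain ⟨σ, hσ⟩ := Module.projective_lifting_property L.mkQ
      (LinearMap.id : (((Fin s → ℤ) × (Fin q → ℤ)) ⧸ L) →ₗ[ℤ] _)
      (Submodule.mkQ_surjective L)
    have hmem : ∀ w, w - σ (L.mkQ w) ∈ L := by
      intro w
      rw [← Submodule.Quotient.mk_eq_zero, ← Submodule.mkQ_apply, map_sub, ← LinearMap.comp_apply,
        hσ, LinearMap.id_apply, sub_self]
    have hli : LinearIndependent ℤ r := by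
      rw [Fintype.linearIndependent_iff]
      intro g hg i
      have := congrFun (congrArg Prod.fst hg) i
      simp only [Prod.fst_sum, Prod.smul_fst, Finset.sum_apply, Pi.smul_apply, hr,
        Pi.single_apply, smul_eq_mul, mul_ite, mul_zero, Finset.sum_ite_eq,
        Finset.mem_univ, if_true, Pi.zero_apply, Prod.fst_zero] at this
      rcases mul_eq_zero.1 this with h | h
      · exact h
      · exact absurd h (hd i).ne'
    let B := Module.Basis.span hli
    let ρ : ((Fin s → ℤ) × (Fin q → ℤ)) →ₗ[ℤ] L :=
      (LinearMap.id - σ ∘ₗ L.mkQ).codRestrict L (by intro w; simpa using hmem w)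
    let c : Fin s → (((Fin s → ℤ) × (Fin q → ℤ)) →ₗ[ℤ] ℤ) :=
      fun k => (B.coord k) ∘ₗ ρ
    have hρr : ∀ i, ρ (r i) = B i := by
      intro i
      have hri : r i ∈ L := Submodule.subset_span (Set.mem_range_self i)
      have h0 : (Submodule.Quotient.mk (r i) : _ ⧸ L) = 0 :=
        (Submodule.Quotient.mk_eq_zero L).2 hri
      apply Subtype.ext
      simp [ρ, LinearMap.codRestrict_apply, h0, Module.Basis.span_apply, B]
    have hck : ∀ k i, c k (r i) = if i = k then 1 else 0 := by
      intro k i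
      simp only [c, LinearMap.comp_apply, hρr, Module.Basis.coord_apply, Module.Basis.repr_self]
      exact Finsupp.single_apply
    let g : ((Fin s → ℤ) × (Fin q → ℤ)) →+ Additive Kˣ :=
      AddMonoidHom.mk' (fun w => Additive.ofMul (∏ k, z k ^ (c k w))) (by
        intro w w'
        show Additive.ofMul (∏ k, z k ^ (c k (w + w'))) =
          Additive.ofMul (∏ k, z k ^ (c k w)) + Additive.ofMul (∏ k, z k ^ (c k w'))
        rw [← ofMul_mul, ← Finset.prod_mul_distrib]
        exact congrArg _ (Finset.prod_congr rfl fun k _ => by rw [map_add, zpow_add]))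
    have hgr : ∀ i, (g (r i)).toMul = z i := by
      intro i
      show (∏ k, z k ^ (c k (r i))) = z i
      have h : ∀ k, z k ^ (c k (r i)) = if i = k then z i else 1 := by
        intro k
        rw [hck]
        split
        · next h => rw [h, zpow_one]
        · rw [zpow_zero]
      rw [Finset.prod_congr rfl fun k _ => h k, Finset.prod_ite_eq]
      simp
    refine ⟨⟨fun i => (g ((Pi.single i 1 : Fin s → ℤ), 0)).toMul,
            fun j => (g ((0 : Fin s → ℤ), Pi.single j 1)).toMul⟩, ?_⟩
    funext i
    show (g ((Pi.single i 1 : Fin s → ℤ), 0)).toMul ^ d i *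
        ∏ j, (g ((0 : Fin s → ℤ), Pi.single j 1)).toMul ^ b i j = z i
    have hdecomp : r i = d i • ((Pi.single i 1 : Fin s → ℤ), (0 : Fin q → ℤ))
        + ∑ j, b i j • ((0 : Fin s → ℤ), (Pi.single j 1 : Fin q → ℤ)) := by
      have h1 : (r i).1 = (d i • ((Pi.single i 1 : Fin s → ℤ), (0 : Fin q → ℤ))
          + ∑ j, b i j • ((0 : Fin s → ℤ), (Pi.single j 1 : Fin q → ℤ))).1 := by
        simp only [Prod.fst_add, Prod.smul_fst, Prod.fst_sum]
        funext k
        simp [hr, Pi.single_apply, mul_ite]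
      have h2 : (r i).2 = (d i • ((Pi.single i 1 : Fin s → ℤ), (0 : Fin q → ℤ))
          + ∑ j, b i j • ((0 : Fin s → ℤ), (Pi.single j 1 : Fin q → ℤ))).2 := by
        simp only [Prod.snd_add, Prod.smul_snd, Prod.snd_sum]
        funext k
        simp [hr, Pi.single_apply, mul_ite, Finset.sum_ite_eq]
      exact Prod.ext h1 h2
    have hgri : g (r i) = d i • g ((Pi.single i 1 : Fin s → ℤ), 0)
        + ∑ j, b i j • g ((0 : Fin s → ℤ), Pi.single j 1) := by
      conv_lhs => rw [hdecomp]
      rw [map_add, map_zsmul, map_sum]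
      exact congrArg _ (Finset.sum_congr rfl fun j _ => map_zsmul g _ _)
    rw [← hgr i, hgri]
    simp only [toMul_add, toMul_zsmul, toMul_sum]
  · -- surjective → saturated
    intro h2 m v hm hmv
    rw [hL, Submodule.mem_span_range_iff_exists_fun] at hmv ⊢
    obtain ⟨c, hc⟩ := hmv
    have hc1 : ∀ k, c k * d k = m * v.1 k := by
      intro k
      have := congrFun (congrArg Prod.fst hc) k
      simpa [hr, Prod.fst_sum, Prod.smul_fst, Finset.sum_apply, Pi.smul_apply, smul_eq_mul,
        Pi.single_apply, mul_ite, mul_zero, Finset.sum_ite_eq] using this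
    have hc2 : ∀ j, (∑ i, c i * b i j) = m * v.2 j := by
      intro j
      have := congrFun (congrArg Prod.snd hc) j
      simpa [hr, Prod.snd_sum, Prod.smul_snd, Finset.sum_apply, Pi.smul_apply, smul_eq_mul] using this
    have hdiv1 : ∀ i, m ∣ c i * d i := fun i => ⟨v.1 i, hc1 i⟩
    have hdiv2 : ∀ j, m ∣ ∑ i, c i * b i j := fun j => ⟨v.2 j, hc2 j⟩
    have hdvd : ∀ i₀, m ∣ c i₀ := by
      intro i₀
      haveI : Fact (Nat.Prime 2) := ⟨by norm_num⟩
      set two : ℚˣ := Units.mk0 2 (by norm_num) with htwo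
      obtain ⟨⟨y, x⟩, hyx⟩ := h2 ℚ (fun i => if i = i₀ then two else 1)
      have hyx' : ∀ i, y i ^ d i * ∏ j, x j ^ b i j = if i = i₀ then two else 1 :=
        fun i => congrFun hyx i
      set u : ℚˣ := (∏ i, y i ^ ((c i * d i) / m)) * ∏ j, x j ^ ((∑ i, c i * b i j) / m)
        with hu
      have e1 : u ^ m = (∏ i, y i ^ (c i * d i)) * ∏ j, x j ^ (∑ i, c i * b i j) := by
        rw [hu, mul_zpow, ← Finset.prod_zpow, ← Finset.prod_zpow]
        congr 1
        · exact Finset.prod_congr rfl fun i _ => by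
            rw [← zpow_mul, Int.ediv_mul_cancel (hdiv1 i)]
        · exact Finset.prod_congr rfl fun j _ => by
            rw [← zpow_mul, Int.ediv_mul_cancel (hdiv2 j)]
      have emid : ∀ i, (y i ^ d i * ∏ j, x j ^ b i j) ^ c i
          = y i ^ (c i * d i) * ∏ j, x j ^ (c i * b i j) := by
        intro i
        rw [mul_zpow, ← zpow_mul, mul_comm (d i) (c i), ← Finset.prod_zpow]
        congr 1
        exact Finset.prod_congr rfl fun j _ => by rw [← zpow_mul, mul_comm (b i j) (c i)]
      have e3 : (∏ i, y i ^ (c i * d i)) * ∏ j, x j ^ (∑ i, c i * b i j)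
          = ∏ i, (y i ^ d i * ∏ j, x j ^ b i j) ^ c i := by
        rw [Finset.prod_congr rfl fun i _ => emid i, Finset.prod_mul_distrib]
        congr 1
        rw [Finset.prod_comm]
        exact Finset.prod_congr rfl fun j _ => (zpow_finset_sum _ _ _)
      have e2 : (∏ i, (if i = i₀ then two else 1) ^ c i) = two ^ c i₀ := by
        have h : ∀ i, (if i = i₀ then two else 1 : ℚˣ) ^ c i
            = if i = i₀ then two ^ c i else 1 := by
          intro i; split <;> simp [one_zpow]
        rw [Finset.prod_congr rfl fun i _ => h i, Finset.prod_ite_eq']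
        simp
      have hum : u ^ m = two ^ c i₀ := by
        rw [e1, e3, Finset.prod_congr rfl fun i _ => by rw [hyx' i], e2]
      let vp : ℚˣ →* Multiplicative ℤ :=
        MonoidHom.mk' (fun w => Multiplicative.ofAdd (padicValRat 2 (w : ℚ))) (by
          intro a b
          show Multiplicative.ofAdd (padicValRat 2 ((a * b : ℚˣ) : ℚ)) = _
          rw [← ofAdd_add]
          congr 1
          push_cast
          exact padicValRat.mul a.ne_zero b.ne_zero)
      have hv := congrArg (fun w => (vp w).toAdd) hum
      simp only [map_zpow, toAdd_zpow] at hv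
      have htwoval : (vp two).toAdd = 1 := by
        show padicValRat 2 ((two : ℚˣ) : ℚ) = 1
        rw [htwo]
        simpa using padicValRat.self (p := 2) (by norm_num)
      rw [htwoval] at hv
      simp only [smul_eq_mul, mul_one] at hv
      exact ⟨_, hv.symm⟩
    refine ⟨fun i => c i / m, ?_⟩
    have key : m • (∑ i, (c i / m) • r i) = m • v := by
      rw [Finset.smul_sum, ← hc]
      refine Finset.sum_congr rfl fun i _ => ?_
      rw [smul_smul, Int.mul_ediv_cancel' (hdvd i)]
    exact smul_right_injective _ hm key
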